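/- Fix w ∈ ℝⁿ and β ∈ (0,1), and suppose L(w,·) is measurable and μ-integrable. Then the set A_β(w) = argmin_{α ∈ ℝ} F_β(w,α) is a nonempty closed bounded interval (i.e., nonempty, compact, and convex). -/

import Mathlib

open MeasureTheory

/-- For fixed `w` and `β ∈ (0,1)`, with `L w` measurable and integrable, the set
`A_β(w) = {α | F_β(w,α) = ⨅ α', F_β(w,α')}` of minimizers of `F_β(w,·)` is a nonempty
closed bounded interval (nonempty, compact and convex). -/
theorem stmt_3 {n : ℕ} (μ : Measure (Fin n → ℝ)) [IsProbabilityMeasure μ]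
    (L : (Fin n → ℝ) → (Fin n → ℝ) → ℝ) (w : Fin n → ℝ) (β : ℝ)
    (hβ : β ∈ Set.Ioo (0 : ℝ) 1)
    (hmeas : Measurable (L w)) (hint : Integrable (L w) μ) :
    ({α : ℝ | (α + (1 - β)⁻¹ * ∫ r, max (L w r - α) 0 ∂μ)
        = ⨅ α' : ℝ, (α' + (1 - β)⁻¹ * ∫ r, max (L w r - α') 0 ∂μ)}).Nonempty ∧
    IsCompact {α : ℝ | (α + (1 - β)⁻¹ * ∫ r, max (L w r - α) 0 ∂μ)
        = ⨅ α' : ℝ, (α' + (1 - β)⁻¹ * ∫ r, max (L w r - α') 0 ∂μ)} ∧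
    Convex ℝ {α : ℝ | (α + (1 - β)⁻¹ * ∫ r, max (L w r - α) 0 ∂μ)
        = ⨅ α' : ℝ, (α' + (1 - β)⁻¹ * ∫ r, max (L w r - α') 0 ∂μ)} := by
  obtain ⟨hβ0, hβ1⟩ := hβ
  have h1β : (0:ℝ) < 1 - β := by linarith
  set c : ℝ := (1 - β)⁻¹ with hc_def
  have hc1 : 1 < c := (one_lt_inv_iff₀).2 ⟨h1β, by linarith⟩
  have hc0 : 0 < c := by linarith
  set I : ℝ := ∫ r, L w r ∂μ with hI_def
  set g : ℝ → ℝ := fun α => ∫ r, max (L w r - α) 0 ∂μ with hg_def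
  set f : ℝ → ℝ := fun α => α + c * g α with hf_def
  -- integrability
  have hgint : ∀ α : ℝ, Integrable (fun r => max (L w r - α) 0) μ := fun α =>
    (hint.sub (integrable_const α)).pos_part
  have hg0 : ∀ α : ℝ, 0 ≤ g α := fun α =>
    integral_nonneg fun r => le_max_right _ _
  have hgI : ∀ α : ℝ, I - α ≤ g α := by
    intro α
    have h1 : ∫ r, (L w r - α) ∂μ ≤ g α :=
      integral_mono (hint.sub (integrable_const α)) (hgint α) fun r => le_max_left _ _
    have h2 : ∫ r, (L w r - α) ∂μ = I - α := by
      rw [integral_sub hint (integrable_const α), integral_const]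
      simp
      rfl
    linarith
  -- lower bounds on f
  have hfl1 : ∀ α : ℝ, α ≤ f α := by
    intro α
    have := mul_nonneg hc0.le (hg0 α)
    simp only [hf_def]; linarith
  have hfl2 : ∀ α : ℝ, α + c * (I - α) ≤ f α := by
    intro α
    have := mul_le_mul_of_nonneg_left (hgI α) hc0.le
    simp only [hf_def]; linarith
  -- Lipschitz continuity of g, hence continuity of f
  have hglip : ∀ x y : ℝ, |g x - g y| ≤ |x - y| := by
    intro x y
    have h1 : g x - g y = ∫ r, (max (L w r - x) 0 - max (L w r - y) 0) ∂μ := by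
      rw [integral_sub (hgint x) (hgint y)]
    rw [h1]
    calc |∫ r, (max (L w r - x) 0 - max (L w r - y) 0) ∂μ|
        ≤ ∫ r, |max (L w r - x) 0 - max (L w r - y) 0| ∂μ := by
          simpa [Real.norm_eq_abs] using
            norm_integral_le_integral_norm (μ := μ)
              (fun r => max (L w r - x) 0 - max (L w r - y) 0)
      _ ≤ ∫ r, |x - y| ∂μ := by
          refine integral_mono ((hgint x).sub (hgint y)).abs (integrable_const _) fun r => ?_
          calc |max (L w r - x) 0 - max (L w r - y) 0| ≤ |(L w r - x) - (L w r - y)| :=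
                abs_max_sub_max_le_abs _ _ _
            _ = |x - y| := by rw [abs_sub_comm]; ring_nf
      _ = |x - y| := by rw [integral_const]; simp
  have hgcont : Continuous g := by
    apply LipschitzWith.continuous (K := 1)
    apply LipschitzWith.of_dist_le_mul
    intro x y
    simpa [Real.dist_eq] using hglip x y
  have hfcont : Continuous f := by
    simp only [hf_def]
    exact continuous_id.add (continuous_const.mul hgcont)
  -- convexity inequality for g
  have hgconv : ∀ x y a b : ℝ, 0 ≤ a → 0 ≤ b → a + b = 1 →
      g (a * x + b * y) ≤ a * g x + b * g y := by
    intro x y a b ha hb hab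
    have h1 : ∀ r, max (L w r - (a * x + b * y)) 0
        ≤ a * max (L w r - x) 0 + b * max (L w r - y) 0 := by
      intro r
      have e : L w r - (a * x + b * y) = a * (L w r - x) + b * (L w r - y) := by
        have : a = 1 - b := by linarith
        rw [this]; ring
      rw [e]
      have h2 : a * (L w r - x) ≤ a * max (L w r - x) 0 :=
        mul_le_mul_of_nonneg_left (le_max_left _ _) ha
      have h3 : b * (L w r - y) ≤ b * max (L w r - y) 0 :=
        mul_le_mul_of_nonneg_left (le_max_left _ _) hb
      have h4 : 0 ≤ a * max (L w r - x) 0 := mul_nonneg ha (le_max_right _ _)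
      have h5 : 0 ≤ b * max (L w r - y) 0 := mul_nonneg hb (le_max_right _ _)
      exact max_le (by linarith) (by linarith)
    calc g (a * x + b * y)
        ≤ ∫ r, (a * max (L w r - x) 0 + b * max (L w r - y) 0) ∂μ :=
          integral_mono (hgint _) (((hgint x).const_mul a).add ((hgint y).const_mul b)) h1
      _ = a * g x + b * g y := by
          rw [integral_add ((hgint x).const_mul a) ((hgint y).const_mul b),
            integral_const_mul, integral_const_mul]
  -- convexity inequality for f
  have hfconv : ∀ x y a b : ℝ, 0 ≤ a → 0 ≤ b → a + b = 1 →
      f (a * x + b * y) ≤ a * f x + b * f y := by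
    intro x y a b ha hb hab
    have := mul_le_mul_of_nonneg_left (hgconv x y a b ha hb hab) hc0.le
    simp only [hf_def]; nlinarith
  -- coercivity box: sublevel set {f ≤ f 0} ⊆ Icc lo hi
  set lo : ℝ := (c * I - f 0) / (c - 1) with hlo_def
  set hi : ℝ := f 0 with hhi_def
  have hsub : ∀ α : ℝ, f α ≤ f 0 → α ∈ Set.Icc lo hi := by
    intro α hα
    constructor
    · rw [hlo_def, div_le_iff₀ (by linarith : (0:ℝ) < c - 1)]
      have := hfl2 α
      nlinarith
    · exact le_trans (hfl1 α) hα
  have h0mem : (0:ℝ) ∈ Set.Icc lo hi := hsub 0 le_rfl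
  -- existence of a global minimizer
  obtain ⟨α₀, hα₀mem, hα₀min⟩ :=
    isCompact_Icc.exists_isMinOn ⟨0, h0mem⟩ hfcont.continuousOn
  have hglobal : ∀ α : ℝ, f α₀ ≤ f α := by
    intro α
    by_cases h : f α ≤ f 0
    · exact hα₀min (hsub α h)
    · exact le_trans (hα₀min h0mem) (by linarith)
  -- the infimum equals f α₀
  have hbdd : BddBelow (Set.range f) := ⟨f α₀, by rintro _ ⟨α, rfl⟩; exact hglobal α⟩
  have hinf : (⨅ α' : ℝ, f α') = f α₀ :=
    le_antisymm (ciInf_le hbdd α₀) (le_ciInf hglobal)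
  -- rewrite the target set
  have hset : {α : ℝ | (α + (1 - β)⁻¹ * ∫ r, max (L w r - α) 0 ∂μ)
      = ⨅ α' : ℝ, (α' + (1 - β)⁻¹ * ∫ r, max (L w r - α') 0 ∂μ)}
      = {α : ℝ | f α = f α₀} := by
    have : (⨅ α' : ℝ, (α' + (1 - β)⁻¹ * ∫ r, max (L w r - α') 0 ∂μ)) = f α₀ := hinf
    ext α
    simp only [Set.mem_setOf_eq, this]
    exact Iff.rfl
  rw [hset]
  refine ⟨⟨α₀, rfl⟩, ?_, ?_⟩
  · -- compact: closed subset of Icc lo hi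
    have hclosed : IsClosed {α : ℝ | f α = f α₀} :=
      isClosed_eq hfcont continuous_const
    have hss : {α : ℝ | f α = f α₀} ⊆ Set.Icc lo hi := by
      intro α hα
      exact hsub α (le_trans (le_of_eq hα) (hglobal 0))
    exact isCompact_Icc.of_isClosed_subset hclosed hss
  · -- convex
    intro x hx y hy a b ha hb hab
    simp only [Set.mem_setOf_eq] at hx hy ⊢
    have h1 : f (a * x + b * y) ≤ a * f x + b * f y := hfconv x y a b ha hb hab
    rw [hx, hy] at h1
    have h2 : a * f α₀ + b * f α₀ = f α₀ := by rw [← add_mul, hab, one_mul]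
    have h3 := hglobal (a * x + b * y)
    simp only [smul_eq_mul]
    linarith
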